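/- Let φ(z) = λz be a rotation of C with |λ| = 1 and λ not a root of unity, and let h, a_0 ∈ C with |h| = |a_0| = 1 and λ^n a_0 ≠ h for all n ≥ 0. If λ, a_0, h are algebraic numbers, then there exists a constant C < 0 such that log|λ^n − h/a_0| ≥ C · n for all n ∈ N. Consequently, the series ∑_{n≥0} d^{−n} log[φ^n(a_0), h] converges (is bounded below) for every d > 1. -/

import Mathlib

open Filter Topology

/-- The chordal metric on `ℂ ⊂ ℙ¹`: `[z,w] = |z−w| / (√(1+|z|²)√(1+|w|²))`. -/
noncomputable def chordalDist (z w : ℂ) : ℝ :=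
  ‖z - w‖ /
    (Real.sqrt (1 + ‖z‖ ^ 2) * Real.sqrt (1 + ‖w‖ ^ 2))


/-- Pure real-arithmetic chain for the Liouville bound. -/
private lemma real_chain (d1 d2 M Nr P x : ℝ) (n D T : ℕ)
    (hn : 1 ≤ n) (hd1 : 1 ≤ d1) (hd2 : 1 ≤ d2) (hM1 : 1 ≤ M)
    (hNr0 : 0 < Nr) (hP0 : 0 < P)
    (hlow : 1 ≤ (d1 ^ n * d2) ^ D * Nr)
    (hPb : P ≤ (2 * M ^ n) ^ T)
    (hx : x = Nr / P) :
    Real.log (2 * (d2 ^ D * 2 ^ T) * (d1 ^ D * M ^ T))⁻¹ * n ≤ Real.log x := by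
  have hd10 : (0:ℝ) < d1 := lt_of_lt_of_le one_pos hd1
  have hd20 : (0:ℝ) < d2 := lt_of_lt_of_le one_pos hd2
  have hM0 : (0:ℝ) < M := lt_of_lt_of_le one_pos hM1
  set A := d2 ^ D * 2 ^ T with hA
  set B := d1 ^ D * M ^ T with hB
  have hA1 : (1:ℝ) ≤ A := by
    have h1 : (1:ℝ) ≤ d2 ^ D := one_le_pow₀ hd2
    have h2 : (1:ℝ) ≤ (2:ℝ) ^ T := one_le_pow₀ one_le_two
    nlinarith
  have hB1 : (1:ℝ) ≤ B := by
    have h1 : (1:ℝ) ≤ d1 ^ D := one_le_pow₀ hd1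
    have h2 : (1:ℝ) ≤ M ^ T := one_le_pow₀ hM1
    nlinarith
  have hA0 : (0:ℝ) < A := lt_of_lt_of_le one_pos hA1
  have hB0 : (0:ℝ) < B := lt_of_lt_of_le one_pos hB1
  have hABn : (d1 ^ n * d2) ^ D * (2 * M ^ n) ^ T = A * B ^ n := by
    rw [hA, hB]; ring
  have hNrP : (A * B ^ n)⁻¹ ≤ x := by
    rw [hx]
    have h1 : (d1 ^ n * d2) ^ D * (2 * M ^ n) ^ T > 0 := by positivity
    rw [← hABn, inv_eq_one_div, div_le_div_iff₀ h1 hP0]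
    have h2Mn : (0:ℝ) < (2 * M ^ n) ^ T := by positivity
    nlinarith [mul_le_mul_of_nonneg_right hlow (le_of_lt h2Mn)]
  have hfinal : ((2 * A * B)⁻¹) ^ n ≤ x := by
    refine le_trans ?_ hNrP
    rw [inv_pow]
    have h1 : A * B ^ n ≤ (2 * A * B) ^ n := by
      have h2A : (1:ℝ) ≤ 2 * A := by nlinarith
      have hA2n : A ≤ (2 * A) ^ n :=
        le_trans (by nlinarith) (le_self_pow₀ h2A (Nat.one_le_iff_ne_zero.mp hn))
      calc A * B ^ n ≤ (2 * A) ^ n * B ^ n := by nlinarith [pow_pos hB0 n]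
        _ = (2 * A * B) ^ n := by rw [← mul_pow]
    exact inv_anti₀ (by positivity) h1
  calc Real.log (2 * A * B)⁻¹ * n = Real.log (((2 * A * B)⁻¹) ^ n) := by
        rw [Real.log_pow]; ring
    _ ≤ Real.log x := Real.log_le_log (by positivity) hfinal

set_option maxHeartbeats 800000 in
open IntermediateField in
/-- Liouville-type lower bound: if `α, β` are algebraic with `αⁿ ≠ β`, then
`|αⁿ − β|` decays at most exponentially. -/
lemma key_lower_bound (α β : ℂ) (hα : IsAlgebraic ℚ α) (hβ : IsAlgebraic ℚ β)
    (hne : ∀ n : ℕ, α ^ n ≠ β) :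
    ∃ C : ℝ, C < 0 ∧ ∀ n : ℕ, 1 ≤ n →
      C * (n : ℝ) ≤ Real.log (‖α ^ n - β‖) := by
  classical
  have hfinS : Finite ({α, β} : Set ℂ) := Set.Finite.to_subtype (Set.toFinite _)
  have hint : ∀ x ∈ ({α, β} : Set ℂ), IsIntegral ℚ x := by
    intro x hx
    rcases hx with rfl | hx
    · exact hα.isIntegral
    · exact (Set.mem_singleton_iff.mp hx) ▸ hβ.isIntegral
  haveI hfd : FiniteDimensional ℚ (adjoin ℚ ({α, β} : Set ℂ)) :=
    finiteDimensional_adjoin hint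
  set K := adjoin ℚ ({α, β} : Set ℂ) with hKdef
  haveI hKint : Algebra.IsIntegral ℚ K := Algebra.IsIntegral.of_finite ℚ K
  have hαK : α ∈ K := subset_adjoin ℚ _ (by simp)
  have hβK : β ∈ K := subset_adjoin ℚ _ (by simp)
  obtain ⟨a, haℂ⟩ : ∃ a : K, (a : ℂ) = α := ⟨⟨α, hαK⟩, rfl⟩
  obtain ⟨b, hbℂ⟩ : ∃ b : K, (b : ℂ) = β := ⟨⟨β, hβK⟩, rfl⟩
  clear hKdef hαK hβK hint hfinS
  clear_value K
  -- denominators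
  have hInj : ∀ x : ℤ, algebraMap ℤ K x = 0 → x = 0 := by
    intro x hx
    rwa [algebraMap_int_eq, eq_intCast, Int.cast_eq_zero] at hx
  have haAlg : IsAlgebraic ℤ a :=
    (IsFractionRing.isAlgebraic_iff ℤ ℚ K).mpr
      (IsIntegral.isAlgebraic (Algebra.IsIntegral.isIntegral a))
  have hbAlg : IsAlgebraic ℤ b :=
    (IsFractionRing.isAlgebraic_iff ℤ ℚ K).mpr
      (IsIntegral.isAlgebraic (Algebra.IsIntegral.isIntegral b))
  obtain ⟨d₁, hd₁, hx₁⟩ := haAlg.exists_integral_multiple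
  obtain ⟨d₂, hd₂, hx₂⟩ := hbAlg.exists_integral_multiple
  have hu : IsIntegral ℤ (algebraMap ℤ K d₁ * a) := by rw [← Algebra.smul_def]; exact hx₁
  have hv : IsIntegral ℤ (algebraMap ℤ K d₂ * b) := by rw [← Algebra.smul_def]; exact hx₂
  set D := Module.finrank ℚ K with hD
  set T := Fintype.card (K →ₐ[ℚ] ℂ) with hT
  set M : ℝ := 1 + ∑ σ : K →ₐ[ℚ] ℂ, (‖σ a‖ + ‖σ b‖) with hM
  have hsum_nonneg : (0:ℝ) ≤ ∑ σ : K →ₐ[ℚ] ℂ, (‖σ a‖ + ‖σ b‖) :=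
    Finset.sum_nonneg fun σ _ => by positivity
  have hM1 : (1:ℝ) ≤ M := le_add_of_nonneg_right hsum_nonneg
  have hM0 : (0:ℝ) < M := lt_of_lt_of_le one_pos hM1
  have hMa : ∀ σ : K →ₐ[ℚ] ℂ, ‖σ a‖ ≤ M := by
    intro σ
    have h1 : ‖σ a‖ + ‖σ b‖ ≤
        ∑ τ : K →ₐ[ℚ] ℂ, (‖τ a‖ + ‖τ b‖) :=
      Finset.single_le_sum (f := fun τ : K →ₐ[ℚ] ℂ => ‖τ a‖ + ‖τ b‖)
        (fun τ _ => by positivity) (Finset.mem_univ σ)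
    have h2 : ‖σ a‖ ≤ ‖σ a‖ + ‖σ b‖ :=
      le_add_of_nonneg_right (by positivity)
    linarith
  have hMb : ∀ σ : K →ₐ[ℚ] ℂ, ‖σ b‖ ≤ M := by
    intro σ
    have h1 : ‖σ a‖ + ‖σ b‖ ≤
        ∑ τ : K →ₐ[ℚ] ℂ, (‖τ a‖ + ‖τ b‖) :=
      Finset.single_le_sum (f := fun τ : K →ₐ[ℚ] ℂ => ‖τ a‖ + ‖τ b‖)
        (fun τ _ => by positivity) (Finset.mem_univ σ)
    have h2 : ‖σ b‖ ≤ ‖σ a‖ + ‖σ b‖ :=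
      le_add_of_nonneg_left (by positivity)
    linarith
  set A : ℝ := (|(d₂ : ℝ)|) ^ D * 2 ^ T with hA
  set B : ℝ := (|(d₁ : ℝ)|) ^ D * M ^ T with hB
  have hd₁R : (1:ℝ) ≤ |(d₁ : ℝ)| := by
    rw [← Int.cast_abs]
    exact_mod_cast Int.one_le_abs hd₁
  have hd₂R : (1:ℝ) ≤ |(d₂ : ℝ)| := by
    rw [← Int.cast_abs]
    exact_mod_cast Int.one_le_abs hd₂
  have hA1 : (1:ℝ) ≤ A := by
    have h1 : (1:ℝ) ≤ |(d₂:ℝ)| ^ D := one_le_pow₀ hd₂R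
    have h2 : (1:ℝ) ≤ (2:ℝ) ^ T := one_le_pow₀ one_le_two
    nlinarith
  have hB1 : (1:ℝ) ≤ B := by
    have h1 : (1:ℝ) ≤ |(d₁:ℝ)| ^ D := one_le_pow₀ hd₁R
    have h2 : (1:ℝ) ≤ M ^ T := one_le_pow₀ hM1
    nlinarith
  have hA0 : (0:ℝ) < A := lt_of_lt_of_le one_pos hA1
  have hB0 : (0:ℝ) < B := lt_of_lt_of_le one_pos hB1
  refine ⟨Real.log (2 * A * B)⁻¹, ?_, ?_⟩
  · apply Real.log_neg (by positivity)
    rw [inv_lt_one_iff₀]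
    right; nlinarith
  intro n hn
  -- the element γ = aⁿ - b is nonzero
  set γ : K := a ^ n - b with hγdef
  have hγℂ : (γ : ℂ) = α ^ n - β := by
    rw [hγdef]
    push_cast
    rw [haℂ, hbℂ]
  have hγ0 : γ ≠ 0 := by
    intro hzero
    apply hne n
    have : (γ : ℂ) = 0 := by rw [hzero]; rfl
    rw [hγℂ] at this
    exact sub_eq_zero.mp this
  -- norm of γ
  set N : ℚ := Algebra.norm ℚ γ with hN
  have hN0 : N ≠ 0 := by
    rw [hN, Algebra.norm_ne_zero_iff]
    exact hγ0
  -- integrality of the scaled element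
  have he : IsIntegral ℤ (algebraMap ℤ K (d₁ ^ n * d₂) * γ) := by
    have hrw : algebraMap ℤ K (d₁ ^ n * d₂) * γ =
        algebraMap ℤ K d₂ * (algebraMap ℤ K d₁ * a) ^ n -
          (algebraMap ℤ K d₁) ^ n * (algebraMap ℤ K d₂ * b) := by
      simp only [map_mul, map_pow, hγdef]
      ring
    rw [hrw]
    exact (isIntegral_algebraMap.mul (hu.pow n)).sub
      ((isIntegral_algebraMap.pow n).mul hv)
  have hNe : IsIntegral ℤ (Algebra.norm ℚ (algebraMap ℤ K (d₁ ^ n * d₂) * γ)) :=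
    Algebra.isIntegral_norm ℚ he
  obtain ⟨m, hm⟩ := IsIntegrallyClosed.isIntegral_iff.mp hNe
  have hnormmul : Algebra.norm ℚ (algebraMap ℤ K (d₁ ^ n * d₂) * γ) =
      ((d₁ ^ n * d₂ : ℤ) : ℚ) ^ D * N := by
    rw [map_mul, IsScalarTower.algebraMap_apply ℤ ℚ K, Algebra.norm_algebraMap, hN, hD]
    norm_num
  have hm0 : m ≠ 0 := by
    intro hm0
    rw [hm0, map_zero] at hm
    rw [hnormmul] at hm
    have hc0 : ((d₁ ^ n * d₂ : ℤ) : ℚ) ≠ 0 := by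
      exact_mod_cast mul_ne_zero (pow_ne_zero n hd₁) hd₂
    exact hN0 (by
      rcases mul_eq_zero.mp hm.symm with h | h
      · exact absurd h (pow_ne_zero D hc0)
      · exact h)
  -- lower bound on |N| over ℝ
  set Nr : ℝ := |(N : ℝ)| with hNr
  have hNr0 : (0:ℝ) < Nr := abs_pos.mpr (by exact_mod_cast hN0)
  have hlow : 1 ≤ (|(d₁:ℝ)| ^ n * |(d₂:ℝ)|) ^ D * Nr := by
    have h1 : (1:ℝ) ≤ |(m : ℝ)| := by
      rw [← Int.cast_abs]
      exact_mod_cast Int.one_le_abs hm0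
    have h2 : ((m : ℚ) : ℝ) = ((d₁ ^ n * d₂ : ℤ) : ℝ) ^ D * (N : ℝ) := by
      have := congrArg (fun q : ℚ => (q : ℝ)) (hm.trans hnormmul)
      push_cast at this ⊢
      convert this using 2
      simp
    calc (1:ℝ) ≤ |(m:ℝ)| := h1
      _ = |((d₁ ^ n * d₂ : ℤ) : ℝ) ^ D * (N : ℝ)| := by
          rw [show ((m:ℤ):ℝ) = ((m:ℚ):ℝ) by push_cast; ring, h2]
      _ = |((d₁ ^ n * d₂ : ℤ) : ℝ)| ^ D * Nr := by
          rw [abs_mul, abs_pow, hNr]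
      _ = (|(d₁:ℝ)| ^ n * |(d₂:ℝ)|) ^ D * Nr := by
          push_cast
          rw [abs_mul, abs_pow]
  -- product over embeddings
  have hprod : Nr = ∏ σ : K →ₐ[ℚ] ℂ, ‖σ γ‖ := by
    have h1 : algebraMap ℚ ℂ N = ∏ σ : K →ₐ[ℚ] ℂ, σ γ :=
      Algebra.norm_eq_prod_embeddings ℚ ℂ γ
    have h2 : ‖algebraMap ℚ ℂ N‖ = ∏ σ : K →ₐ[ℚ] ℂ, ‖σ γ‖ := by
      rw [h1, norm_prod]
    rwa [show (algebraMap ℚ ℂ N) = ((N:ℝ):ℂ) by push_cast; rfl, Complex.norm_real, Real.norm_eq_abs] at h2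
  set σ₀ : K →ₐ[ℚ] ℂ := K.val with hσ₀
  have hσ₀γ : σ₀ γ = α ^ n - β := by
    rw [show σ₀ γ = (γ : ℂ) from rfl, hγℂ]
  have hsplit : Nr = ‖σ₀ γ‖ *
      ∏ σ ∈ Finset.univ.erase σ₀, ‖σ γ‖ := by
    rw [hprod, ← Finset.mul_prod_erase Finset.univ _ (Finset.mem_univ σ₀)]
  set P : ℝ := ∏ σ ∈ Finset.univ.erase σ₀, ‖σ γ‖ with hP
  have hσγ0 : ∀ σ : K →ₐ[ℚ] ℂ, σ γ ≠ 0 := by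
    intro σ hzero
    exact hγ0 (map_eq_zero_iff σ (RingHom.injective (σ : K →+* ℂ))|>.mp hzero)
  have hP0 : (0:ℝ) < P :=
    Finset.prod_pos fun σ _ => norm_pos_iff.mpr (hσγ0 σ)
  -- bound each conjugate
  have hσbound : ∀ σ : K →ₐ[ℚ] ℂ, ‖σ γ‖ ≤ 2 * M ^ n := by
    intro σ
    have h1 : ‖σ γ‖ ≤ ‖(σ a) ^ n‖ + ‖σ b‖ := by
      have : σ γ = (σ a) ^ n - σ b := by rw [hγdef, map_sub, map_pow]
      rw [this, sub_eq_add_neg]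
      calc ‖(σ a) ^ n + -(σ b)‖ ≤
          ‖(σ a) ^ n‖ + ‖-(σ b)‖ := norm_add_le _ _
        _ = ‖(σ a) ^ n‖ + ‖σ b‖ := by rw [norm_neg]
    have h2 : ‖(σ a) ^ n‖ ≤ M ^ n := by
      rw [norm_pow]
      exact pow_le_pow_left₀ (norm_nonneg _) (hMa σ) n
    have h3 : ‖σ b‖ ≤ M ^ n :=
      (hMb σ).trans (le_self_pow₀ hM1 (Nat.one_le_iff_ne_zero.mp hn))
    linarith
  have hPbound : P ≤ (2 * M ^ n) ^ T := by
    calc P ≤ ∏ σ ∈ Finset.univ.erase σ₀, (2 * M ^ n) :=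
        Finset.prod_le_prod (fun σ _ => norm_nonneg _) (fun σ _ => hσbound σ)
      _ = (2 * M ^ n) ^ (Finset.univ.erase σ₀).card := Finset.prod_const _
      _ ≤ (2 * M ^ n) ^ T := by
          have hbase : (1:ℝ) ≤ 2 * M ^ n := by nlinarith [one_le_pow₀ hM1 (n := n)]
          have hcard : (Finset.univ.erase σ₀).card ≤ T := by
            rw [hT, ← Finset.card_univ]
            exact Finset.card_le_card (Finset.erase_subset _ _)
          exact pow_le_pow_right₀ hbase hcard
  clear_value D T M A B γ N Nr P σ₀
  clear hm hnormmul hm0 hNe he hu hv hx₁ hx₂ haAlg hbAlg hInj m hσγ0 hγ0 hγℂ hγdef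
    hN0 hN hprod
  have habs : ‖α ^ n - β‖ = Nr / P := by
    rw [hsplit, hσ₀γ]
    field_simp
  rw [hA, hB]
  exact real_chain |(d₁:ℝ)| |(d₂:ℝ)| M Nr P _ n D T hn hd₁R hd₂R hM1 hNr0 hP0 hlow hPbound habs

set_option maxHeartbeats 800000 in
/-- Let `φ(z) = λz` with `|λ| = 1`, `λ` not a root of unity, and let
`h, a₀` on the unit circle with `λⁿ a₀ ≠ h` for all `n ≥ 0`.  If `λ, a₀, h` are algebraic
numbers, then there is `C < 0` with `log|λⁿ − h/a₀| ≥ C·n` for all `n ≥ 1`; consequently for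
every integer `d > 1` the series `∑ d^{−n} log [φⁿ(a₀), h]` converges. -/
theorem degenerating_escape_rate_stmt11
    (lam a0 h : ℂ)
    (h_alg : IsAlgebraic ℚ lam ∧ IsAlgebraic ℚ a0 ∧ IsAlgebraic ℚ h)
    (h_lam : ‖lam‖ = 1)
    (h_not_root : ∀ n : ℕ, 0 < n → lam ^ n ≠ 1)
    (h_a0 : ‖a0‖ = 1) (h_h : ‖h‖ = 1)
    (h_ne : ∀ n : ℕ, lam ^ n * a0 ≠ h) :
    (∃ C : ℝ, C < 0 ∧ ∀ n : ℕ, 1 ≤ n →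
      C * (n : ℝ) ≤ Real.log (‖lam ^ n - h / a0‖)) ∧
    ∀ d : ℕ, 1 < d → ∃ S : ℝ,
      Tendsto (fun N => ∑ n ∈ Finset.range N,
        ((d : ℝ) ^ n)⁻¹ * Real.log (chordalDist (lam ^ n * a0) h)) atTop (𝓝 S) := by
  have ha00 : a0 ≠ 0 := by
    intro h0
    rw [h0, norm_zero] at h_a0
    norm_num at h_a0
  have hβalg : IsAlgebraic ℚ (h / a0) := by
    rw [div_eq_mul_inv]
    exact ((h_alg.2.2.isIntegral.mul (h_alg.2.1.inv).isIntegral)).isAlgebraic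
  have hne : ∀ n : ℕ, lam ^ n ≠ h / a0 := by
    intro n hEq
    apply h_ne n
    rw [hEq]
    field_simp
  obtain ⟨C, hC0, hC⟩ := key_lower_bound lam (h / a0) h_alg.1 hβalg hne
  have hβabs : ‖h / a0‖ = 1 := by
    rw [norm_div, h_h, h_a0, div_one]
  refine ⟨⟨C, hC0, hC⟩, ?_⟩
  intro d hd
  have hd1 : (1:ℝ) < (d : ℝ) := by exact_mod_cast hd
  have hd0 : (0:ℝ) < (d : ℝ) := lt_trans one_pos hd1
  set r : ℝ := ((d : ℝ))⁻¹ with hr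
  have hr0 : 0 ≤ r := by positivity
  have hr1 : r < 1 := by
    rw [hr, inv_lt_one_iff₀]; right; exact hd1
  -- the general term
  set f : ℕ → ℝ := fun n => ((d : ℝ) ^ n)⁻¹ * Real.log (chordalDist (lam ^ n * a0) h) with hf
  -- compute the chordal distance
  have habs_eq : ∀ n : ℕ, ‖lam ^ n * a0 - h‖ = ‖lam ^ n - h / a0‖ := by
    intro n
    rw [show lam ^ n * a0 - h = (lam ^ n - h / a0) * a0 by field_simp, norm_mul, h_a0, mul_one]
  have hcd : ∀ n : ℕ, chordalDist (lam ^ n * a0) h = ‖lam ^ n - h / a0‖ / 2 := by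
    intro n
    have h1 : ‖lam ^ n * a0‖ = 1 := by
      rw [norm_mul, norm_pow, h_lam, h_a0, one_pow, one_mul]
    rw [chordalDist, habs_eq n, h1, h_h]
    norm_num [Real.mul_self_sqrt (by norm_num : (0:ℝ) ≤ 2)]
  have habs_pos : ∀ n : ℕ, 0 < ‖lam ^ n - h / a0‖ := by
    intro n
    exact norm_pos_iff.mpr (sub_ne_zero.mpr (hne n))
  have habs_le : ∀ n : ℕ, ‖lam ^ n - h / a0‖ ≤ 2 := by
    intro n
    calc ‖lam ^ n - h / a0‖ ≤
        ‖lam ^ n‖ + ‖h / a0‖ := by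
          rw [sub_eq_add_neg]
          refine (norm_add_le _ _).trans ?_
          rw [norm_neg]
      _ = 2 := by rw [norm_pow, h_lam, hβabs, one_pow]; norm_num
  have hlog_eq : ∀ n : ℕ, Real.log (chordalDist (lam ^ n * a0) h) =
      Real.log (‖lam ^ n - h / a0‖) - Real.log 2 := by
    intro n
    rw [hcd n, Real.log_div (ne_of_gt (habs_pos n)) two_ne_zero]
  have ht_nonpos : ∀ n : ℕ, Real.log (chordalDist (lam ^ n * a0) h) ≤ 0 := by
    intro n
    rw [hlog_eq n]
    have := Real.log_le_log (habs_pos n) (habs_le n)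
    linarith
  have ht_lb : ∀ n : ℕ, 1 ≤ n → C * n - Real.log 2 ≤
      Real.log (chordalDist (lam ^ n * a0) h) := by
    intro n hn
    rw [hlog_eq n]
    linarith [hC n hn]
  have hlog2 : (0:ℝ) < Real.log 2 := Real.log_pos (by norm_num)
  -- summability
  have hnormf : ∀ k : ℕ, ‖f (k + 1)‖ ≤ (|C| * (k + 1) + Real.log 2) * r ^ k := by
    intro k
    have hn1 : 1 ≤ k + 1 := Nat.le_add_left 1 k
    have h1 : |Real.log (chordalDist (lam ^ (k+1) * a0) h)| ≤ |C| * (k + 1) + Real.log 2 := by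
      rw [abs_of_nonpos (ht_nonpos (k+1))]
      have := ht_lb (k+1) hn1
      have hCabs : -C = |C| := (abs_of_neg hC0).symm
      push_cast at this ⊢
      nlinarith
    have h2 : (((d:ℝ)) ^ (k+1))⁻¹ ≤ r ^ k := by
      rw [← inv_pow]
      exact pow_le_pow_of_le_one hr0 (le_of_lt hr1) (Nat.le_succ k)
    have h3 : ‖f (k+1)‖ = (((d:ℝ)) ^ (k+1))⁻¹ * |Real.log (chordalDist (lam ^ (k+1) * a0) h)| := by
      rw [hf]
      simp only [Real.norm_eq_abs, abs_mul]
      congr 1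
      rw [abs_of_nonneg (by positivity)]
    rw [h3]
    have h4 : (0:ℝ) ≤ |Real.log (chordalDist (lam ^ (k+1) * a0) h)| := abs_nonneg _
    calc (((d:ℝ)) ^ (k+1))⁻¹ * |Real.log (chordalDist (lam ^ (k+1) * a0) h)| ≤
        r ^ k * (|C| * (k + 1) + Real.log 2) := by
          apply mul_le_mul h2 h1 h4 (by positivity)
      _ = (|C| * (k + 1) + Real.log 2) * r ^ k := mul_comm _ _
  have hS1 : Summable (fun k : ℕ => (k : ℝ) * r ^ k) := by
    have := summable_pow_mul_geometric_of_norm_lt_one (R := ℝ) 1 (by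
      rwa [Real.norm_eq_abs, abs_of_nonneg hr0])
    simpa using this
  have hS2 : Summable (fun k : ℕ => r ^ k) := summable_geometric_of_lt_one hr0 hr1
  have hSbnd : Summable (fun k : ℕ => (|C| * (k + 1) + Real.log 2) * r ^ k) := by
    have : (fun k : ℕ => (|C| * (k + 1) + Real.log 2) * r ^ k) =
        (fun k : ℕ => |C| * ((k:ℝ) * r ^ k) + (|C| + Real.log 2) * r ^ k) := by
      funext k; ring
    rw [this]
    exact (hS1.mul_left _).add (hS2.mul_left _)
  have hSf1 : Summable (fun k : ℕ => f (k + 1)) :=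
    Summable.of_norm_bounded hSbnd hnormf
  have hSf : Summable f := (summable_nat_add_iff 1).mp hSf1
  exact ⟨∑' n, f n, hSf.hasSum.tendsto_sum_nat⟩
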